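/- For every feasible schedule σ on m machines: Σ_{j=1}^n C_j(σ) ≥ s · Σ_{j=1}^n ⌈j/m⌉. -/

import Mathlib

open Finset

/-- A feasible schedule on `m` identical machines for `n` jobs with processing
times `p` and uniform setup time `s`.  A part is a tuple
`(machine, job, q, t)`: a piece of length `q > 0` of the job, started at time
`t ≥ 0` and preceded by a setup of length `s`, occupying the machine during
`[t, t + s + q)`. -/
structure Schedule (m n : ℕ) (p : Fin n → ℝ) (s : ℝ) where
  parts : Finset (Fin m × Fin n × ℝ × ℝ)
  q_pos : ∀ x ∈ parts, 0 < x.2.2.1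
  t_nonneg : ∀ x ∈ parts, 0 ≤ x.2.2.2
  sum_q : ∀ j : Fin n,
    ∑ x ∈ parts.filter (fun x => x.2.1 = j), x.2.2.1 = p j
  disj : ∀ x ∈ parts, ∀ y ∈ parts, x ≠ y → x.1 = y.1 →
    x.2.2.2 + s + x.2.2.1 ≤ y.2.2.2 ∨ y.2.2.2 + s + y.2.2.1 ≤ x.2.2.2

namespace Schedule

variable {m n : ℕ} {p : Fin n → ℝ} {s : ℝ}

/-- The completion time of job `j`: the largest finishing time `t + s + q`
over all parts of job `j` (as a supremum of the finite set of these values). -/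
noncomputable def C (σ : Schedule m n p s) (j : Fin n) : ℝ :=
  sSup {r : ℝ | ∃ x ∈ σ.parts, x.2.1 = j ∧ r = x.2.2.2 + s + x.2.2.1}

/-- The total completion time of a schedule. -/
noncomputable def total (σ : Schedule m n p s) : ℝ := ∑ j, σ.C j

end Schedule

/-- Each finishing time of a part is at most the completion time of its job. -/
lemma end_le_C {m n : ℕ} {p : Fin n → ℝ} {s : ℝ} (σ : Schedule m n p s)
    (x : Fin m × Fin n × ℝ × ℝ) (hx : x ∈ σ.parts) :
    x.2.2.2 + s + x.2.2.1 ≤ σ.C x.2.1 := by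
  have hset : {r : ℝ | ∃ y ∈ σ.parts, y.2.1 = x.2.1 ∧ r = y.2.2.2 + s + y.2.2.1}
      = ↑((σ.parts.filter (fun y => y.2.1 = x.2.1)).image
          (fun y => y.2.2.2 + s + y.2.2.1)) := by
    ext r
    simp only [Set.mem_setOf_eq, coe_image, Set.mem_image, mem_coe, mem_filter]
    constructor
    · rintro ⟨y, hy, h1, h2⟩; exact ⟨y, ⟨hy, h1⟩, h2.symm⟩
    · rintro ⟨y, ⟨hy, h1⟩, h2⟩; exact ⟨y, hy, h1, h2.symm⟩
  unfold Schedule.C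
  rw [hset]
  apply le_csSup (Finset.bddAbove _)
  simp only [coe_image, Set.mem_image, mem_coe, mem_filter]
  exact ⟨x, ⟨hx, rfl⟩, rfl⟩

/-- Disjoint setup intervals on a single machine, all finishing by `T`,
use up at least `card * s` time. -/
lemma machine_bound {m n : ℕ} {p : Fin n → ℝ} {s : ℝ} (hs : 0 < s)
    (σ : Schedule m n p s) (i : Fin m) :
    ∀ P : Finset (Fin m × Fin n × ℝ × ℝ), P ⊆ σ.parts → (∀ x ∈ P, x.1 = i) →
      ∀ T : ℝ, (∀ x ∈ P, x.2.2.2 + s + x.2.2.1 ≤ T) → P.Nonempty →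
      (P.card : ℝ) * s ≤ T := by
  intro P
  induction P using Finset.strongInduction with
  | _ P ih =>
    intro hPsub hPi T hPT hne
    obtain ⟨y, hyP, hymax⟩ := P.exists_max_image (fun x => x.2.2.2) hne
    have hq := σ.q_pos y (hPsub hyP)
    have ht := σ.t_nonneg y (hPsub hyP)
    have hTy := hPT y hyP
    have hcard : P.card = (P.erase y).card + 1 :=
      (Finset.card_erase_add_one hyP).symm
    by_cases h0 : (P.erase y).Nonempty
    · have hends : ∀ x ∈ P.erase y, x.2.2.2 + s + x.2.2.1 ≤ y.2.2.2 := by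
        intro x hx
        have hxP := Finset.mem_of_mem_erase hx
        have hxy : x ≠ y := Finset.ne_of_mem_erase hx
        have hqx := σ.q_pos x (hPsub hxP)
        have hle := hymax x hxP
        rcases σ.disj x (hPsub hxP) y (hPsub hyP) hxy
            ((hPi x hxP).trans (hPi y hyP).symm) with h | h
        · exact h
        · exfalso; linarith
      have hIH := ih _ (Finset.erase_ssubset hyP)
        (fun x hx => hPsub (Finset.mem_of_mem_erase hx))
        (fun x hx => hPi x (Finset.mem_of_mem_erase hx))
        y.2.2.2 hends h0
      rw [hcard]
      push_cast
      nlinarith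
    · rw [Finset.not_nonempty_iff_eq_empty] at h0
      rw [hcard, h0]
      simp only [Finset.card_empty]
      push_cast
      linarith

/-- Key counting lemma: if all jobs of a nonempty set `S` complete by time `T`,
then `T ≥ ⌈|S|/m⌉ · s`. -/
lemma key_bound {m n : ℕ} (hm : 0 < m) {p : Fin n → ℝ} (hp : ∀ j, 0 < p j)
    {s : ℝ} (hs : 0 < s) (σ : Schedule m n p s)
    (S : Finset (Fin n)) (hSne : S.Nonempty) (T : ℝ)
    (hT : ∀ j ∈ S, σ.C j ≤ T) :
    ((⌈(S.card : ℚ) / (m : ℚ)⌉ : ℤ) : ℝ) * s ≤ T := by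
  classical
  -- every job has at least one part
  have hpart : ∀ j : Fin n, (σ.parts.filter (fun x => x.2.1 = j)).Nonempty := by
    intro j
    rw [Finset.nonempty_iff_ne_empty]
    intro h
    have := σ.sum_q j
    rw [h, Finset.sum_empty] at this
    have := hp j
    linarith
  set f : Fin n → Fin m × Fin n × ℝ × ℝ := fun j => (hpart j).choose with hf
  have hfmem : ∀ j, f j ∈ σ.parts.filter (fun x => x.2.1 = j) :=
    fun j => (hpart j).choose_spec
  have hfparts : ∀ j, f j ∈ σ.parts := fun j => (Finset.mem_filter.mp (hfmem j)).1
  have hfjob : ∀ j, (f j).2.1 = j := fun j => (Finset.mem_filter.mp (hfmem j)).2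
  have hfinj : Function.Injective f := by
    intro a b hab
    rw [← hfjob a, ← hfjob b, hab]
  set Q : Finset (Fin m × Fin n × ℝ × ℝ) := S.image f with hQ
  have hQcard : Q.card = S.card := Finset.card_image_of_injective S hfinj
  set r : ℤ := ⌈(S.card : ℚ) / (m : ℚ)⌉ with hr
  have hrpos : 0 < r := by
    rw [hr, Int.ceil_pos]
    apply div_pos
    · exact_mod_cast Finset.card_pos.mpr hSne
    · exact_mod_cast hm
  -- pigeonhole: some machine gets at least r parts of Q
  have hfib : Q.card = ∑ i : Fin m, (Q.filter (fun x => x.1 = i)).card :=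
    Finset.card_eq_sum_card_fiberwise (fun x _ => Finset.mem_univ x.1)
  have hex : ∃ i : Fin m, r ≤ ((Q.filter (fun x => x.1 = i)).card : ℤ) := by
    by_contra h
    push_neg at h
    have hsum : (Q.card : ℤ) ≤ (m : ℤ) * (r - 1) := by
      rw [hfib]
      push_cast
      calc (∑ i : Fin m, ((Q.filter (fun x => x.1 = i)).card : ℤ))
          ≤ ∑ _i : Fin m, (r - 1) :=
            Finset.sum_le_sum (fun i _ => by have := h i; omega)
        _ = (m : ℤ) * (r - 1) := by
            rw [Finset.sum_const, Finset.card_univ, Fintype.card_fin]; ring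
    have hlt : ((r : ℚ) - 1) < (S.card : ℚ) / (m : ℚ) := by
      have := Int.ceil_lt_add_one ((S.card : ℚ) / (m : ℚ))
      rw [← hr] at this
      linarith
    have hm' : (0 : ℚ) < (m : ℚ) := by exact_mod_cast hm
    have : (m : ℚ) * ((r : ℚ) - 1) < (S.card : ℚ) := by
      have h2 : (m : ℚ) * ((r : ℚ) - 1) < (m : ℚ) * ((S.card : ℚ) / (m : ℚ)) :=
        (mul_lt_mul_iff_right₀ hm').mpr hlt
      rwa [mul_div_cancel₀ _ (ne_of_gt hm')] at h2
    have hsum' : ((Q.card : ℤ) : ℚ) ≤ ((m : ℤ) : ℚ) * (((r : ℤ) : ℚ) - 1) := by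
      exact_mod_cast hsum
    rw [hQcard] at hsum'
    push_cast at hsum'
    linarith
  obtain ⟨i, hi⟩ := hex
  set P : Finset (Fin m × Fin n × ℝ × ℝ) := Q.filter (fun x => x.1 = i) with hP
  have hPsub : P ⊆ σ.parts := by
    intro x hx
    have hxQ : x ∈ Q := Finset.mem_of_mem_filter x hx
    obtain ⟨j, _, hj⟩ := Finset.mem_image.mp hxQ
    rw [← hj]; exact hfparts j
  have hPi : ∀ x ∈ P, x.1 = i := fun x hx => (Finset.mem_filter.mp hx).2
  have hPT : ∀ x ∈ P, x.2.2.2 + s + x.2.2.1 ≤ T := by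
    intro x hx
    have hxQ : x ∈ Q := Finset.mem_of_mem_filter x hx
    obtain ⟨j, hjS, hj⟩ := Finset.mem_image.mp hxQ
    have h1 : x.2.2.2 + s + x.2.2.1 ≤ σ.C x.2.1 := end_le_C σ x (hPsub hx)
    have h2 : x.2.1 = j := by rw [← hj]; exact hfjob j
    rw [h2] at h1
    exact h1.trans (hT j hjS)
  have hPne : P.Nonempty := by
    rw [← Finset.card_pos]
    omega
  have hmb := machine_bound hs σ i P hPsub hPi T hPT hPne
  have hcard : ((r : ℤ) : ℝ) ≤ (P.card : ℝ) := by exact_mod_cast hi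
  calc ((r : ℤ) : ℝ) * s ≤ (P.card : ℝ) * s := by
        apply mul_le_mul_of_nonneg_right hcard (le_of_lt hs)
    _ ≤ T := hmb

/-- Every feasible schedule `σ` on `m` machines satisfies
`∑ⱼ C j σ ≥ s · ∑_{j=1}^n ⌈j/m⌉` (jobs counted `1, …, n`). -/
theorem stmt8 {m n : ℕ} (hm : 0 < m) {p : Fin n → ℝ} (hp : ∀ j, 0 < p j)
    {s : ℝ} (hs : 0 < s) (σ : Schedule m n p s) :
    σ.total ≥
      s * ∑ j : Fin n, ((⌈(((j : ℕ) : ℚ) + 1) / (m : ℚ)⌉ : ℤ) : ℝ) := by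
  classical
  set g : Fin n → ℝ := σ.C with hg
  set e := Tuple.sort g with he
  have hmono : Monotone (g ∘ e) := Tuple.monotone_sort g
  have htot : σ.total = ∑ k : Fin n, g (e k) := by
    rw [Schedule.total, Equiv.sum_comp e g]
  rw [htot, Finset.mul_sum, ge_iff_le]
  apply Finset.sum_le_sum
  intro k _
  -- the set of jobs with the k+1 smallest completion times
  set S : Finset (Fin n) := (Finset.Iic k).image e with hS
  have hScard : S.card = (k : ℕ) + 1 := by
    rw [hS, Finset.card_image_of_injective _ e.injective, Fin.card_Iic]
  have hSne : S.Nonempty := by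
    rw [← Finset.card_pos]; omega
  have hT : ∀ j ∈ S, σ.C j ≤ g (e k) := by
    intro j hj
    obtain ⟨i, hik, hij⟩ := Finset.mem_image.mp hj
    rw [← hij]
    exact hmono (Finset.mem_Iic.mp hik)
  have := key_bound hm hp hs σ S hSne (g (e k)) hT
  rw [hScard] at this
  push_cast at this ⊢
  linarith
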